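/- arXiv:2210.14505 — 9 statements merged into one kernel-verified Lean document; each statement's English description precedes it below -/
import Mathlib

section
/- Let q be a prime power, a | (q+1), t = (q^2-1)/a, and b an integer with a+b odd and b ≤ a-3. For integers i,j with 0 ≤ i,j ≤ ((a+b+1)/2)·((q+1)/a) − 2 and (i,j) ≠ (0,0), one has t | (qi+j) if and only if qi+j = υt for some integer υ with (a−b+1)/2 ≤ υ ≤ (a+b−1)/2. -/
set_option maxHeartbeats 2000000 in

theorem stmt2 (q a b t : ℕ) (hq : IsPrimePow q) (ha : a ∣ q + 1)
    (ht : t = (q ^ 2 - 1) / a) (hab : (a + b) % 2 = 1) (hb : b + 3 ≤ a) :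
    ∀ i j : ℕ, i ≤ ((a + b + 1) / 2) * ((q + 1) / a) - 2 →
      j ≤ ((a + b + 1) / 2) * ((q + 1) / a) - 2 → ¬(i = 0 ∧ j = 0) →
      (t ∣ q * i + j ↔
        ∃ υ : ℕ, q * i + j = υ * t ∧ (a - b + 1) / 2 ≤ υ ∧ υ ≤ (a + b - 1) / 2) := by
  intro i j hi hj hij
  have hq2 : 2 ≤ q := hq.two_le
  obtain ⟨s, rfl⟩ : ∃ s, q = s + 1 := ⟨q - 1, by omega⟩
  have hs1 : 1 ≤ s := by omega
  obtain ⟨c, hc⟩ := ha   -- hc : s + 1 + 1 = a * c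
  have ha3 : 3 ≤ a := by omega
  have hc1 : 1 ≤ c := by
    rcases Nat.eq_zero_or_pos c with h | h
    · subst h; simp at hc
    · exact h
  have hca : (s + 1 + 1) / a = c := by rw [hc]; exact Nat.mul_div_cancel_left c (by omega)
  have htc : t = c * s := by
    have h1 : (s + 1) ^ 2 - 1 = a * (c * s) := by
      have h2 : a * (c * s) = (s + 1 + 1) * s := by rw [hc]; ring
      have h3 : (s + 1) ^ 2 = (s + 1 + 1) * s + 1 := by ring
      omega
    rw [ht, h1, Nat.mul_div_cancel_left _ (by omega : 0 < a)]
  obtain ⟨m, hm⟩ : ∃ m, a + b + 1 = 2 * m := ⟨(a + b + 1) / 2, by omega⟩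
  have hm2 : (a + b + 1) / 2 = m := by omega
  rw [hm2, hca] at hi hj
  have hmb : b + 2 ≤ m := by omega
  have hmc : 2 ≤ m * c := by
    have h2 : 2 ≤ m := by omega
    calc 2 = 2 * 1 := by ring
    _ ≤ m * c := Nat.mul_le_mul h2 hc1
  have hi2 : i + 2 ≤ m * c := (Nat.le_sub_iff_add_le hmc).mp hi
  have hj2 : j + 2 ≤ m * c := (Nat.le_sub_iff_add_le hmc).mp hj
  have e1 : (a - b + 1) / 2 = m - b := by omega
  have e2 : (a + b - 1) / 2 = m - 1 := by omega
  rw [e1, e2]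
  -- integer facts
  have Hc : ((s : ℤ) + 1 + 1) = a * c := by exact_mod_cast hc
  have Hm : (a : ℤ) + b + 1 = 2 * m := by exact_mod_cast hm
  have Hb : (b : ℤ) + 3 ≤ a := by exact_mod_cast hb
  have Hi : (i : ℤ) + 2 ≤ m * c := by exact_mod_cast hi2
  have Hj : (j : ℤ) + 2 ≤ m * c := by exact_mod_cast hj2
  have Hc1 : (1 : ℤ) ≤ c := by exact_mod_cast hc1
  have Hs1 : (1 : ℤ) ≤ s := by exact_mod_cast hs1
  constructor
  · rintro ⟨υ, hυ⟩
    have hυ' : (s + 1) * i + j = υ * (c * s) := by rw [hυ, htc]; ring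
    have Ht : ((s : ℤ) + 1) * i + j = (υ : ℤ) * ((c : ℤ) * s) := by exact_mod_cast hυ'
    have hυ1 : 1 ≤ υ := by
      rcases Nat.eq_zero_or_pos υ with h | h
      · subst h
        simp only [Nat.zero_mul] at hυ'
        have hz : (s + 1) * i = 0 := by omega
        have hiz : i = 0 := by
          rcases Nat.mul_eq_zero.mp hz with h' | h' <;> omega
        exact absurd ⟨hiz, by omega⟩ hij
      · exact h
    have Hυ1 : (1 : ℤ) ≤ υ := by exact_mod_cast hυ1
    have Hk : ((s : ℤ) + 1) * ((υ : ℤ) * c - i) = j + υ * c := by linear_combination -Ht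
    have Hk1 : 1 ≤ (υ : ℤ) * c - i := by
      by_contra h
      push_neg at h
      have h0 : (υ : ℤ) * c - i ≤ 0 := by linarith
      have P1 : ((s : ℤ) + 1) * ((υ : ℤ) * c - i) ≤ 0 :=
        mul_nonpos_of_nonneg_of_nonpos (by linarith) h0
      have P2 : (1 : ℤ) * c ≤ (υ : ℤ) * c :=
        mul_le_mul_of_nonneg_right Hυ1 (by linarith)
      have Hjz : (0 : ℤ) ≤ j := Nat.cast_nonneg j
      linarith
    refine ⟨υ, by rw [hυ, mul_comm], ?_, ?_⟩
    · -- lower bound: m - b ≤ υ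
      have Hlow : (m : ℤ) ≤ υ + b := by
        by_contra h
        push_neg at h
        have h1 : (υ : ℤ) + b + 1 ≤ m := by linarith
        have P1 : ((s : ℤ) + 1) * 1 ≤ ((s : ℤ) + 1) * ((υ : ℤ) * c - i) :=
          mul_le_mul_of_nonneg_left Hk1 (by linarith)
        have HaZ : (a : ℤ) * c = (2 * m - b - 1) * c := by
          have : (a : ℤ) = 2 * m - b - 1 := by linarith
          rw [this]
        have P2 : (0 : ℤ) ≤ ((m : ℤ) - b - 1 - υ) * c :=
          mul_nonneg (by linarith) (by linarith)
        linarith only [P1, Hk, Hc, HaZ, P2, Hj]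
      omega
    · -- upper bound: υ ≤ m - 1
      have Hupp : (υ : ℤ) + 1 ≤ m := by
        by_contra h
        push_neg at h
        have h1 : (m : ℤ) ≤ υ := by linarith
        have P1 : ((s : ℤ) + 1) * ((i : ℤ) + 2) ≤ ((s : ℤ) + 1) * ((m : ℤ) * c) :=
          mul_le_mul_of_nonneg_left Hi (by linarith)
        have P2 : (0 : ℤ) ≤ (((υ : ℤ) - m) * c) * s :=
          mul_nonneg (mul_nonneg (by linarith) (by linarith)) (by linarith)
        have P3 : (0 : ℤ) ≤ ((a : ℤ) - 1 - m) * c :=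
          mul_nonneg (by linarith) (by linarith)
        linarith only [P1, P2, P3, Ht, Hc, Hj, Hc1]
      omega
  · rintro ⟨υ, h1, h2, h3⟩
    exact ⟨υ, by rw [h1, mul_comm]⟩
end

section
/- Let q be a prime power, a | (q+1), t = (q^2-1)/a, and b an integer with a+b even and b ≤ a−4. For integers i,j with 0 ≤ i,j ≤ ((a+b+2)/2)·((q+1)/a) − 3 and (i,j) ≠ (0,0), one has t | (qi+j+q+1) if and only if qi+j+q+1 = υt for some integer υ with (a−b)/2 ≤ υ ≤ (a+b)/2. -/
theorem stmt3 (q a b t : ℕ) (hq : IsPrimePow q) (ha : a ∣ q + 1)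
    (ht : t = (q ^ 2 - 1) / a) (hab : (a + b) % 2 = 0) (hb : b + 4 ≤ a) :
    ∀ i j : ℕ, i ≤ ((a + b + 2) / 2) * ((q + 1) / a) - 3 →
      j ≤ ((a + b + 2) / 2) * ((q + 1) / a) - 3 → ¬(i = 0 ∧ j = 0) →
      (t ∣ q * i + j + q + 1 ↔
        ∃ υ : ℕ, q * i + j + q + 1 = υ * t ∧ (a - b) / 2 ≤ υ ∧ υ ≤ (a + b) / 2) := by
  have hq2 : 2 ≤ q := hq.two_le
  obtain ⟨r, rfl⟩ : ∃ r, q = r + 2 := ⟨q - 2, by omega⟩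
  obtain ⟨c, hc⟩ := ha
  have hc' : r + 3 = a * c := by omega
  have ha1 : 1 ≤ a := by
    rcases Nat.eq_zero_or_pos a with h | h
    · subst h; simp at hc'
    · exact h
  have hc1 : 1 ≤ c := by
    rcases Nat.eq_zero_or_pos c with h | h
    · subst h; simp at hc'
    · exact h
  set s := (a + b) / 2 with hsdef
  have hs : a + b = 2 * s := by omega
  have hsa : s + 2 ≤ a := by omega
  have hs2 : 2 ≤ s := by omega
  have hca : (r + 2 + 1) / a = c := by rw [hc, Nat.mul_div_cancel_left _ ha1]
  have hdiv2 : (a + b + 2) / 2 = s + 1 := by omega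
  have ht' : t = (r + 1) * c := by
    have e1 : (r + 2) ^ 2 - 1 = a * ((r + 1) * c) := by
      have e2 : (r + 1) * (a * c) = a * ((r + 1) * c) := by ring
      have e3 : (r + 1) * (r + 3) + 1 = (r + 2) ^ 2 := by ring
      rw [← e2, ← hc']
      omega
    rw [ht, e1, Nat.mul_div_cancel_left _ ha1]
  intro i j hi hj hij
  rw [hdiv2, hca] at hi hj
  obtain ⟨m, hm⟩ : ∃ m, (s + 1) * c = m := ⟨_, rfl⟩
  rw [hm] at hi hj
  have hm3 : 3 ≤ m := by
    have : 3 * 1 ≤ (s + 1) * c := Nat.mul_le_mul (by omega) hc1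
    omega
  have hi3 : i + 3 ≤ m := by omega
  have hj3 : j + 3 ≤ m := by omega
  have hmq : m + c ≤ r + 3 := by
    have h1 : (s + 2) * c ≤ a * c := Nat.mul_le_mul hsa (le_refl c)
    have h2 : (s + 2) * c = (s + 1) * c + c := by ring
    linarith [hc', hm]
  constructor
  · rintro ⟨υ, hυ⟩
    rw [ht'] at hυ
    -- hυ : (r+2)*i + j + (r+2) + 1 = (r+1)*c*υ
    have hiub : i + 1 ≤ r := by omega
    have hjub : j + 1 ≤ r := by omega
    have hup : υ < s + 1 := by
      have h2 : (r + 1) * (i + 3) ≤ (r + 1) * m := Nat.mul_le_mul (le_refl _) hi3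
      have h2' : (r + 1) * (i + 3) = (r + 1) * i + 3 * r + 3 := by ring
      have hA : (r + 2) * i = (r + 1) * i + i := by ring
      have key : (r + 2) * i + j + (r + 2) + 1 < (r + 1) * m := by linarith
      have hts : (r + 1) * c * (s + 1) = (r + 1) * m := by rw [← hm]; ring
      have hlt : (r + 1) * c * υ < (r + 1) * c * (s + 1) := by
        rw [hts]; linarith
      exact Nat.lt_of_mul_lt_mul_left hlt
    have hlo : a ≤ υ + s := by
      by_contra hcon
      push_neg at hcon
      have hcon' : υ + s + 1 ≤ a := by omega
      have E : (r + 2) * (i + 1) + ((j + 1) + υ * c) = υ * c * (r + 2) := by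
        have h1 : (r + 2) * (i + 1) + ((j + 1) + υ * c)
            = ((r + 2) * i + j + (r + 2) + 1) + υ * c := by ring
        rw [h1, hυ]; ring
      have hdq : (r + 2) ∣ (j + 1) + υ * c :=
        (Nat.dvd_add_right (dvd_mul_right (r + 2) (i + 1))).mp
          (by rw [E]; exact Dvd.intro_left _ rfl)
      have hub : (j + 1) + υ * c ≤ r + 1 := by
        have h1 : (υ + s + 1) * c ≤ a * c := Nat.mul_le_mul hcon' (le_refl c)
        have h2 : (υ + s + 1) * c = υ * c + (s + 1) * c := by ring
        linarith [hc', hm]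
      have hpos : 0 < (j + 1) + υ * c := by positivity
      have := Nat.le_of_dvd hpos hdq
      linarith
    exact ⟨υ, by rw [hυ, ht']; ring, by omega, by omega⟩
  · rintro ⟨υ, hN, -, -⟩
    exact ⟨υ, by rw [hN]; ring⟩
end

section
/- Let q be a prime power, a | (q+1), t = (q^2-1)/a, υ an integer with t | (qi+j) and qi+j = υt, where 0 < qi+j ≤ q^2−1−(q+1)^2/a and 0 ≤ i,j ≤ q−1. Then i = υ(q+1)/a − 1 and j = q − υ(q+1)/a. -/
theorem stmt4 (q a t i j υ : ℕ) (hq : IsPrimePow q) (ha : a ∣ q + 1)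
    (ht : t = (q ^ 2 - 1) / a)
    (hpos : 0 < q * i + j) (hub : q * i + j ≤ q ^ 2 - 1 - (q + 1) ^ 2 / a)
    (hi : i ≤ q - 1) (hj : j ≤ q - 1)
    (hυ1 : 0 < υ) (hυ2 : υ < a) (heq : q * i + j = υ * t) :
    i = υ * ((q + 1) / a) - 1 ∧ j = q - υ * ((q + 1) / a) := by
  obtain ⟨b, hb⟩ := ha
  have hq2 : 2 ≤ q := hq.two_le
  have ha2 : 2 ≤ a := by omega
  have hb0 : 0 < b := by
    rcases Nat.eq_zero_or_pos b with h | h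
    · subst h; simp at hb
    · exact h
  have hba : (q + 1) / a = b := by
    rw [hb, Nat.mul_div_cancel_left _ (by omega : 0 < a)]
  have ht' : t = (q - 1) * b := by
    rw [ht]
    have h1 : q ^ 2 - 1 = a * ((q - 1) * b) := by
      have h := Nat.sq_sub_sq q 1
      simp only [one_pow] at h
      rw [hb] at h
      rw [h]; ring
    rw [h1, Nat.mul_div_cancel_left _ (by omega : 0 < a)]
  set m := υ * b with hm
  have hm1 : 1 ≤ m := Nat.mul_pos hυ1 hb0
  have hm2 : m ≤ q := by
    have h1 : υ * b ≤ (a - 1) * b := Nat.mul_le_mul_right _ (by omega)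
    have h2 : (a - 1) * b = a * b - b := by rw [Nat.sub_mul, one_mul]
    omega
  have hkey : q * i + j = q * (m - 1) + (q - m) := by
    rw [heq, ht']
    have h3 : υ * ((q - 1) * b) = (q - 1) * m := by rw [hm]; ring
    rw [h3]
    zify [hm1, hm2, show 1 ≤ q by omega]
    ring
  have hi' : i = m - 1 := by
    have h1 : (q * i + j) / q = i := by
      rw [Nat.mul_add_div (by omega), Nat.div_eq_of_lt (by omega)]; omega
    have h2 : (q * (m - 1) + (q - m)) / q = m - 1 := by
      rw [Nat.mul_add_div (by omega), Nat.div_eq_of_lt (by omega)]; omega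
    rw [hkey] at h1; omega
  have hj' : j = q - m := by
    rw [hi'] at hkey
    exact Nat.add_left_cancel hkey
  constructor
  · rw [hba, ← hm]; exact hi'
  · rw [hba, ← hm]; exact hj'
end

section
/- Let q be a prime power, a | (q+1), t = (q^2−1)/a, ξ a primitive element of F_{q^2}, m = (a−b+1)/2 with a+b odd, and for i = 1,…,b let φ_i = (1, ξ^{t(m+i−1)}, ξ^{2t(m+i−1)}, …, ξ^{bt(m+i−1)}) ∈ F_{q^2}^{b+1}. Then for each i = 1,…,b, the coordinatewise q-th power of φ_i equals φ_{b+1−i}. -/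
theorem stmt8 (q a t b m : ℕ) (hq : IsPrimePow q) (ha : a ∣ q + 1)
    (ht : t = (q ^ 2 - 1) / a) (hb : b + 3 ≤ a) (hab : (a + b) % 2 = 1)
    (hm : m = (a - b + 1) / 2)
    (F : Type) [Field F] [Fintype F] (hF : Fintype.card F = q ^ 2)
    (ξ : F) (hξ : orderOf ξ = q ^ 2 - 1) :
    ∀ i : ℕ, 1 ≤ i → i ≤ b → ∀ l : Fin (b + 1),
      (ξ ^ (t * (m + i - 1) * (l : ℕ))) ^ q = ξ ^ (t * (m + (b + 1 - i) - 1) * (l : ℕ)) := by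
  intro i hi1 hib l
  have hq2 : 2 ≤ q := hq.two_le
  have hq1 : 1 ≤ q ^ 2 := by nlinarith
  obtain ⟨c, hc⟩ := ha
  have hcz : (q : ℤ) + 1 = (a : ℤ) * c := by exact_mod_cast hc
  have hdvd : a ∣ q ^ 2 - 1 := ⟨c * (q - 1), by
    have h1 : 1 ≤ q := by omega
    zify [hq1, h1]
    linear_combination ((q : ℤ) - 1) * hcz⟩
  have hta : a * t = q ^ 2 - 1 := by rw [ht]; exact Nat.mul_div_cancel' hdvd
  have htq : t * (q + 1) = (q ^ 2 - 1) * c := by rw [hc, ← hta]; ring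
  have h2m : 2 * m + b = a + 1 := by omega
  set A := m + i - 1 with hA
  set B := m + (b + 1 - i) - 1 with hB
  have hAB : A + B = a := by omega
  have key : t * A * (l : ℕ) * q ≡ t * B * (l : ℕ) [MOD q ^ 2 - 1] := by
    rw [Nat.modEq_iff_dvd]
    have hBz : (B : ℤ) = (a : ℤ) - (A : ℤ) := by push_cast; omega
    have hdz : ((q ^ 2 - 1 : ℕ) : ℤ) = (a : ℤ) * t := by exact_mod_cast hta.symm
    have hd2 : (t : ℤ) * ((q : ℤ) + 1) = ((q ^ 2 - 1 : ℕ) : ℤ) * c := by exact_mod_cast htq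
    push_cast
    rw [hBz]
    exact ⟨(l : ℤ) - c * A * l, by linear_combination (-(l : ℤ)) * hdz + (-(A : ℤ) * l) * hd2⟩
  rw [← pow_mul, ← pow_mod_orderOf, hξ, key, ← hξ, pow_mod_orderOf]
end

section
/- Let q be a prime power, a | (q+1), t = (q^2−1)/a, b ≤ min{a−3, q−3} with a+b odd, and m = (a−b+1)/2. Then there exists a vector ρ = (ρ_0,…,ρ_b) ∈ (F_q^*)^{b+1} such that the sums ∑_{l=0}^b ρ_l and ∑_{l=0}^b ξ^{(m+i)lt} ρ_l for i = 0,1,…,b−1 are all nonzero (where ξ is a primitive element of F_{q^2} and the sums are evaluated in F_{q^2}). -/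
/-- Key counting lemma: given a finset `T` of nonzero field elements and `k < T.card`
linear forms with all coefficients nonzero, there is a tuple with entries from `T`
on which all forms are nonzero. -/
lemma key_counting {F : Type} [Field F] (T : Finset F) (n k : ℕ)
    (c : Fin k → Fin (n + 1) → F) (hc : ∀ i l, c i l ≠ 0) (hk : k < T.card) :
    ∃ ρ : Fin (n + 1) → F, (∀ l, ρ l ∈ T) ∧ ∀ i, (∑ l, c i l * ρ l) ≠ 0 := by
  classical
  set S := Fintype.piFinset (fun _ : Fin (n + 1) => T) with hS
  have hScard : S.card = T.card ^ (n + 1) := by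
    simp [hS, Fintype.card_piFinset]
  have hbad : ∀ i : Fin k,
      (S.filter (fun ρ => ∑ l, c i l * ρ l = 0)).card ≤ T.card ^ n := by
    intro i
    have := Finset.card_le_card_of_injOn
      (f := fun (ρ : Fin (n + 1) → F) => fun j : Fin n => ρ j.succ)
      (s := S.filter (fun ρ => ∑ l, c i l * ρ l = 0))
      (t := Fintype.piFinset (fun _ : Fin n => T))
      (by
        intro ρ hρ
        have h1 : ρ ∈ S := (Finset.mem_filter.mp hρ).1
        rw [hS, Fintype.mem_piFinset] at h1
        exact Fintype.mem_piFinset.mpr (fun j => h1 _))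
      (by
        intro ρ hρ ρ' hρ' h
        simp only [Finset.mem_coe, Finset.mem_filter] at hρ hρ'
        have hsum : ∑ l, c i l * ρ l = ∑ l, c i l * ρ' l := by rw [hρ.2, hρ'.2]
        rw [Fin.sum_univ_succ, Fin.sum_univ_succ] at hsum
        have htail : ∀ j : Fin n, ρ j.succ = ρ' j.succ := fun j => congrFun h j
        have hsum2 : ∑ j : Fin n, c i j.succ * ρ j.succ
            = ∑ j : Fin n, c i j.succ * ρ' j.succ := by
          exact Finset.sum_congr rfl (fun j _ => by rw [htail j])
        have h0 : c i 0 * ρ 0 = c i 0 * ρ' 0 := by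
          have := hsum; rw [hsum2] at this; exact add_right_cancel this
        have h00 : ρ 0 = ρ' 0 := mul_left_cancel₀ (hc i 0) h0
        funext l
        refine Fin.cases ?_ ?_ l
        · exact h00
        · exact htail)
    simpa [Fintype.card_piFinset] using this
  set B := Finset.univ.biUnion
    (fun i : Fin k => S.filter (fun ρ => ∑ l, c i l * ρ l = 0)) with hB
  have hBcard : B.card ≤ k * T.card ^ n := by
    calc B.card ≤ ∑ i : Fin k, (S.filter (fun ρ => ∑ l, c i l * ρ l = 0)).card :=
          Finset.card_biUnion_le
      _ ≤ ∑ _i : Fin k, T.card ^ n := Finset.sum_le_sum (fun i _ => hbad i)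
      _ = k * T.card ^ n := by simp [mul_comm]
  have hTpos : 0 < T.card := lt_of_le_of_lt (Nat.zero_le k) hk
  have hlt : B.card < S.card := by
    have h1 : k * T.card ^ n < T.card * T.card ^ n :=
      Nat.mul_lt_mul_of_lt_of_le hk (le_refl _) (Nat.pow_pos hTpos)
    have h2 : T.card * T.card ^ n = T.card ^ (n + 1) := by ring
    omega
  have hnotsub : ¬ S ⊆ B := fun hsub => absurd (Finset.card_le_card hsub) (by omega)
  obtain ⟨ρ, hρS, hρB⟩ := Finset.not_subset.mp hnotsub
  refine ⟨ρ, ?_, ?_⟩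
  · intro l
    simp only [hS, Fintype.mem_piFinset] at hρS
    exact hρS l
  · intro i
    intro hzero
    apply hρB
    rw [hB]
    exact Finset.mem_biUnion.mpr ⟨i, Finset.mem_univ i, Finset.mem_filter.mpr ⟨hρS, hzero⟩⟩

theorem stmt11 (q a t b m : ℕ) (hq : IsPrimePow q) (ha : a ∣ q + 1)
    (ht : t = (q ^ 2 - 1) / a) (hba : b + 3 ≤ a) (hbq : b + 3 ≤ q)
    (hab : (a + b) % 2 = 1) (hm : m = (a - b + 1) / 2)
    (F : Type) [Field F] [Fintype F] (hF : Fintype.card F = q ^ 2)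
    (ξ : F) (hξ : orderOf ξ = q ^ 2 - 1) :
    ∃ ρ : Fin (b + 1) → F,
      (∀ l, ρ l ≠ 0 ∧ (ρ l) ^ q = ρ l) ∧
      (∑ l, ρ l ≠ 0) ∧
      ∀ i : ℕ, i < b → ∑ l : Fin (b + 1), ξ ^ ((m + i) * (l : ℕ) * t) * ρ l ≠ 0 := by
  classical
  have hq3 : 3 ≤ q := by omega
  obtain ⟨k, hk⟩ : ∃ k, q = k + 3 := ⟨q - 3, by omega⟩
  have hfact : q ^ 2 - 1 = (q + 1) * (q - 1) := by
    simpa using Nat.sq_sub_sq q 1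
  have h9 : 9 ≤ q ^ 2 := by
    calc (9 : ℕ) = 3 ^ 2 := by norm_num
      _ ≤ q ^ 2 := Nat.pow_le_pow_left hq3 2
  have hq2pos : 0 < q ^ 2 - 1 := by omega
  have hξ0 : ξ ≠ 0 := by
    intro h
    have h1 : ξ ^ (q ^ 2 - 1) = 1 := by rw [← hξ]; exact pow_orderOf_eq_one ξ
    rw [h, zero_pow (by omega : q ^ 2 - 1 ≠ 0)] at h1
    exact zero_ne_one h1
  -- g generates the multiplicative group of the subfield F_q
  set g : F := ξ ^ (q + 1) with hg
  have hg0 : g ≠ 0 := pow_ne_zero _ hξ0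
  have hgcd : Nat.gcd (q ^ 2 - 1) (q + 1) = q + 1 :=
    Nat.gcd_eq_right ⟨q - 1, hfact⟩
  have hgord : orderOf g = q - 1 := by
    rw [hg, orderOf_pow' ξ (by omega : q + 1 ≠ 0), hξ, hgcd, hfact,
      Nat.mul_div_cancel_left _ (by omega : 0 < q + 1)]
  have hgpow1 : g ^ (q - 1) = 1 := by rw [← hgord]; exact pow_orderOf_eq_one g
  set T : Finset F := (Finset.range (q - 1)).image (fun j => g ^ j) with hT
  have hTcard : T.card = q - 1 := by
    rw [hT, Finset.card_image_of_injOn, Finset.card_range]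
    have hinj : ∀ x y : ℕ, x < q - 1 → y < q - 1 → x < y → g ^ x ≠ g ^ y := by
      intro x y hx hy hlt hxy
      have h1 : g ^ y = g ^ x * g ^ (y - x) := by
        rw [← pow_add]; congr 1; omega
      have h2 : g ^ x * g ^ (y - x) = g ^ x * 1 := by
        rw [mul_one, ← h1, hxy]
      have h3 : g ^ (y - x) = 1 := mul_left_cancel₀ (pow_ne_zero _ hg0) h2
      have h4 : orderOf g ∣ y - x := orderOf_dvd_of_pow_eq_one h3
      rw [hgord] at h4
      have := Nat.eq_zero_of_dvd_of_lt h4 (by omega)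
      omega
    intro x hx y hy hxy
    simp only [Finset.coe_range, Set.mem_Iio] at hx hy
    have hxy' : g ^ x = g ^ y := hxy
    rcases lt_trichotomy x y with h | h | h
    · exact absurd hxy' (hinj x y hx hy h)
    · exact h
    · exact absurd hxy'.symm (hinj y x hy hx h)
  have hTmem : ∀ x ∈ T, x ≠ 0 ∧ x ^ q = x := by
    intro x hx
    rw [hT, Finset.mem_image] at hx
    obtain ⟨j, _, rfl⟩ := hx
    refine ⟨pow_ne_zero _ hg0, ?_⟩
    have h1 : (g ^ j) ^ (q - 1) = 1 := by
      rw [← pow_mul, mul_comm, pow_mul, hgpow1, one_pow]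
    calc (g ^ j) ^ q = (g ^ j) ^ (q - 1 + 1) := by congr 1; omega
      _ = (g ^ j) ^ (q - 1) * g ^ j := by rw [pow_succ]
      _ = g ^ j := by rw [h1, one_mul]
  -- apply the counting lemma with b+1 linear forms
  set c : Fin (b + 1) → Fin (b + 1) → F := fun i l =>
    if (i : ℕ) = 0 then 1 else ξ ^ ((m + ((i : ℕ) - 1)) * (l : ℕ) * t) with hc
  have hcne : ∀ i l, c i l ≠ 0 := by
    intro i l
    rw [hc]
    dsimp only
    split
    · exact one_ne_zero
    · exact pow_ne_zero _ hξ0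
  have hklt : b + 1 < T.card := by rw [hTcard]; omega
  obtain ⟨ρ, hρT, hρc⟩ := key_counting T b (b + 1) c hcne hklt
  refine ⟨ρ, fun l => hTmem _ (hρT l), ?_, ?_⟩
  · have := hρc ⟨0, by omega⟩
    simpa [hc] using this
  · intro i hi
    have := hρc ⟨i + 1, by omega⟩
    simpa [hc] using this
end

section
/- Let q be a prime power, a | (q+1), t = (q^2−1)/a, b ≤ min{a−4, q−3} with a+b even, and m = (a−b)/2. Then there exists a vector ρ = (ρ_0,…,ρ_b) ∈ (F_q^*)^{b+1} such that for each i = 0,1,…,b, the sum ∑_{l=0}^b ξ^{((m+i)t − q − 1)l} ρ_l is nonzero in F_{q^2}. -/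
theorem stmt12 (q a t b m : ℕ) (hq : IsPrimePow q) (ha : a ∣ q + 1)
    (ht : t = (q ^ 2 - 1) / a) (hba : b + 4 ≤ a) (hbq : b + 3 ≤ q)
    (hab : (a + b) % 2 = 0) (hm : m = (a - b) / 2)
    (F : Type) [Field F] [Fintype F] (hF : Fintype.card F = q ^ 2)
    (ξ : Fˣ) (hξ : orderOf ξ = q ^ 2 - 1) :
    ∃ ρ : Fin (b + 1) → F,
      (∀ l, ρ l ≠ 0 ∧ (ρ l) ^ q = ρ l) ∧
      ∀ i : ℕ, i ≤ b →
        ∑ l : Fin (b + 1),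
          ((ξ ^ ((((m : ℤ) + i) * t - q - 1) * (l : ℕ)) : Fˣ) : F) * ρ l ≠ 0 := by
  classical
  have hq3 : 3 ≤ q := by omega
  have hfac : q ^ 2 - 1 = (q + 1) * (q - 1) := by
    simpa using sq_tsub_sq q 1
  set ζ : Fˣ := ξ ^ (q + 1) with hζdef
  have hordζ : orderOf ζ = q - 1 := by
    rw [hζdef, orderOf_pow, hξ, hfac, Nat.gcd_eq_right ⟨q - 1, rfl⟩,
      Nat.mul_div_cancel_left _ (by omega)]
  have hζq : ∀ x : Fˣ, x ∈ Subgroup.zpowers ζ → x ^ q = x := by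
    intro x hx
    obtain ⟨k, rfl⟩ := hx
    have h1 : ζ ^ (q - 1 : ℕ) = 1 := by rw [← hordζ]; exact pow_orderOf_eq_one ζ
    have h2 : (ζ ^ k) ^ (q - 1 : ℕ) = 1 := by
      rw [← zpow_natCast (ζ ^ k), ← zpow_mul, mul_comm, zpow_mul, zpow_natCast, h1, one_zpow]
    calc (ζ ^ k) ^ q = (ζ ^ k) ^ (q - 1 + 1) := by congr 1; omega
      _ = (ζ ^ k) ^ (q - 1 : ℕ) * ζ ^ k := by rw [pow_succ]
      _ = ζ ^ k := by rw [h2, one_mul]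
  set G := Subgroup.zpowers ζ with hGdef
  have hcardG : Fintype.card G = q - 1 := by
    show Fintype.card (Subgroup.zpowers ζ) = q - 1
    rw [Fintype.card_zpowers, hordζ]
  set e : ℕ → ℤ := fun i => ((m : ℤ) + i) * t - q - 1 with hedef
  have key : ∃ ρ : Fin (b + 1) → G, ∀ i ≤ b,
      ∑ l : Fin (b + 1), ((ξ ^ (e i * (l : ℕ)) : Fˣ) : F) * ((ρ l : Fˣ) : F) ≠ 0 := by
    by_contra hcon
    push_neg at hcon
    set badF : ℕ → Finset (Fin (b + 1) → G) := fun i =>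
      Finset.univ.filter (fun ρ =>
        ∑ l : Fin (b + 1), ((ξ ^ (e i * (l : ℕ)) : Fˣ) : F) * ((ρ l : Fˣ) : F) = 0)
      with hbadF
    have hsub : (Finset.univ : Finset (Fin (b + 1) → G)) ⊆
        (Finset.range (b + 1)).biUnion badF := by
      intro ρ _
      obtain ⟨i, hi, hsum⟩ := hcon ρ
      exact Finset.mem_biUnion.2 ⟨i, Finset.mem_range.2 (by omega),
        Finset.mem_filter.2 ⟨Finset.mem_univ _, hsum⟩⟩
    have hcard1 : ∀ i, (badF i).card ≤ (q - 1) ^ b := by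
      intro i
      have := Finset.card_le_card_of_injOn (s := badF i) (f := fun ρ : Fin (b + 1) → G => ρ ∘ Fin.succ)
        (t := (Finset.univ : Finset (Fin b → G)))
        (fun ρ _ => Finset.mem_univ _) ?_
      · simpa [Fintype.card_fun, hcardG] using this
      · intro ρ hρ ρ' hρ' htail
        have hρs := (Finset.mem_filter.1 hρ).2
        have hρ's := (Finset.mem_filter.1 hρ').2
        rw [Fin.sum_univ_succ] at hρs hρ's
        have h0 : ((ξ ^ (e i * ((0 : Fin (b + 1)) : ℕ)) : Fˣ) : F) = 1 := by
          norm_num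
        rw [h0, one_mul] at hρs hρ's
        have htail' : ∀ l : Fin b, ρ l.succ = ρ' l.succ := fun l => congrFun htail l
        have hsum_eq : ∑ l : Fin b, ((ξ ^ (e i * ((l.succ : Fin (b+1)) : ℕ)) : Fˣ) : F) * ((ρ l.succ : Fˣ) : F)
            = ∑ l : Fin b, ((ξ ^ (e i * ((l.succ : Fin (b+1)) : ℕ)) : Fˣ) : F) * ((ρ' l.succ : Fˣ) : F) := by
          exact Finset.sum_congr rfl (fun l _ => by rw [htail' l])
        have h00 : ((ρ 0 : Fˣ) : F) = ((ρ' 0 : Fˣ) : F) := by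
          have h := hρs.trans hρ's.symm
          rw [hsum_eq] at h
          exact add_right_cancel h
        have h0u : ρ 0 = ρ' 0 := Subtype.ext (Units.ext h00)
        funext l
        refine Fin.cases h0u (fun j => htail' j) l
    have htot : ((q - 1) : ℕ) ^ (b + 1) ≤ (b + 1) * (q - 1) ^ b := by
      calc ((q - 1) : ℕ) ^ (b + 1)
          = Fintype.card (Fin (b + 1) → G) := by simp [Fintype.card_fun, hcardG]
        _ = (Finset.univ : Finset (Fin (b + 1) → G)).card := (Finset.card_univ).symm
        _ ≤ ((Finset.range (b + 1)).biUnion badF).card := Finset.card_le_card hsub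
        _ ≤ ∑ i ∈ Finset.range (b + 1), (badF i).card := Finset.card_biUnion_le
        _ ≤ ∑ i ∈ Finset.range (b + 1), (q - 1) ^ b :=
            Finset.sum_le_sum (fun i _ => hcard1 i)
        _ = (b + 1) * (q - 1) ^ b := by rw [Finset.sum_const, Finset.card_range, smul_eq_mul]
    have hpow : 0 < ((q - 1) : ℕ) ^ b := Nat.pow_pos (by omega)
    have : (b + 2) * (q - 1) ^ b ≤ (b + 1) * (q - 1) ^ b := by
      calc (b + 2) * (q - 1) ^ b ≤ (q - 1) * (q - 1) ^ b :=
            Nat.mul_le_mul_right _ (by omega)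
        _ = (q - 1) ^ (b + 1) := by ring
        _ ≤ (b + 1) * (q - 1) ^ b := htot
    nlinarith [hpow]
  obtain ⟨ρ, hρ⟩ := key
  refine ⟨fun l => ((ρ l : Fˣ) : F), fun l => ⟨Units.ne_zero _, ?_⟩, ?_⟩
  · rw [← Units.val_pow_eq_pow_val, hζq (ρ l) (ρ l).2]
  · intro i hi
    exact hρ i hi
end

section
/- Let q be a prime power, a | (q+1) with a ≥ 2, t = (q^2−1)/a, ξ a primitive element of F_{q^2}, β = ξ^a, b ≤ min{a−3, q−3} with a+b odd, n = (b+1)t. Let a-vector a⃗ ∈ F_{q^2}^n have entries ξ^l β^s for 0 ≤ l ≤ b, 0 ≤ s ≤ t−1, and let v ∈ (F_{q^2}^*)^n have the constant value v_l on the l-th block, where v_l^{q+1} = ρ_l for a vector ρ ∈ (F_q^*)^{b+1} as in Lemma 3.1 (i.e., ∑_l ρ_l ≠ 0 and ∑_l ξ^{υtl} ρ_l ≠ 0 for (a−b+1)/2 ≤ υ ≤ (a+b−1)/2). Then for 0 ≤ i, j ≤ ((a+b+1)/2)·((q+1)/a) − 2, the sum σ_{i,j} = ∑_{l=0}^{b}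 ∑_{s=0}^{t−1} (ξ^l β^s)^{qi+j} ρ_l is nonzero if and only if (i,j) = (0,0) or qi+j = υt for some υ with (a−b+1)/2 ≤ υ ≤ (a+b−1)/2. -/
private lemma aux_nt (q a b c m v i j : ℤ) (hq : 2 ≤ q) (hc : 1 ≤ c) (hb : 0 ≤ b)
    (hac : a * c = q + 1) (hm : 2 * m = a + b + 1) (hba : b + 3 ≤ a)
    (hij : q * i + j = v * ((q - 1) * c)) (hi0 : 0 ≤ i) (hj0 : 0 ≤ j)
    (hi2 : i + 2 ≤ m * c) (hj2 : j + 2 ≤ m * c) (hv : 1 ≤ v) :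
    m - b ≤ v ∧ v ≤ m - 1 := by
  have hk : q * (v * c - i) = v * c + j := by linear_combination -hij
  have hk1 : 1 ≤ v * c - i := by nlinarith
  constructor
  · by_contra h
    push_neg at h
    nlinarith [mul_le_mul_of_nonneg_left hk1 (by linarith : (0:ℤ) ≤ q),
      mul_nonneg (by linarith : (0:ℤ) ≤ a - v - m) (by linarith : (0:ℤ) ≤ c)]
  · by_contra h
    push_neg at h
    nlinarith [mul_le_mul_of_nonneg_left
        (by nlinarith : (v - m) * c + 2 ≤ v * c - i) (by linarith : (0:ℤ) ≤ q),
      mul_nonneg (by linarith : (0:ℤ) ≤ q - 1)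
        (mul_nonneg (by linarith : (0:ℤ) ≤ v - m) (by linarith : (0:ℤ) ≤ c)),
      mul_nonneg (by linarith : (0:ℤ) ≤ a - b - 3) (by linarith : (0:ℤ) ≤ c)]

theorem stmt15 (q a t b : ℕ) (hq : IsPrimePow q) (ha : a ∣ q + 1) (ha2 : 2 ≤ a)
    (ht : t = (q ^ 2 - 1) / a) (hba : b + 3 ≤ a) (hbq : b + 3 ≤ q)
    (hab : (a + b) % 2 = 1)
    (F : Type) [Field F] [Fintype F] (hF : Fintype.card F = q ^ 2)
    (ξ : F) (hξ : orderOf ξ = q ^ 2 - 1)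
    (ρ : Fin (b + 1) → F)
    (hρ : ∀ l, ρ l ≠ 0 ∧ (ρ l) ^ q = ρ l)
    (hsum0 : ∑ l, ρ l ≠ 0)
    (hsumυ : ∀ υ : ℕ, (a - b + 1) / 2 ≤ υ → υ ≤ (a + b - 1) / 2 →
      ∑ l : Fin (b + 1), ξ ^ (υ * t * (l : ℕ)) * ρ l ≠ 0) :
    ∀ i j : ℕ, i ≤ ((a + b + 1) / 2) * ((q + 1) / a) - 2 →
      j ≤ ((a + b + 1) / 2) * ((q + 1) / a) - 2 →
      ((∑ l : Fin (b + 1), ∑ s ∈ Finset.range t,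
          (ξ ^ (l : ℕ) * (ξ ^ a) ^ s) ^ (q * i + j) * ρ l) ≠ 0 ↔
        ((i = 0 ∧ j = 0) ∨
          ∃ υ : ℕ, q * i + j = υ * t ∧ (a - b + 1) / 2 ≤ υ ∧ υ ≤ (a + b - 1) / 2)) := by
  intro i j hi hj
  have hq2 : 2 ≤ q := hq.two_le
  set c := (q + 1) / a with hc_def
  set m := (a + b + 1) / 2 with hm_def
  have hac : a * c = q + 1 := Nat.mul_div_cancel' ha
  have hm2 : 2 * m = a + b + 1 := by omega
  have hc1 : 1 ≤ c := by
    rcases Nat.eq_zero_or_pos c with h | h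
    · rw [h, mul_zero] at hac; omega
    · exact h
  have hq2m1 : q ^ 2 - 1 = a * ((q - 1) * c) := by
    have h1 : a * ((q - 1) * c) = (q + 1) * (q - 1) := by rw [← hac]; ring
    rw [h1]
    obtain ⟨q', rfl⟩ : ∃ q', q = q' + 1 := ⟨q - 1, by omega⟩
    have h2 : (q' + 1) ^ 2 = (q' + 1 + 1) * q' + 1 := by ring
    have h3 : q' + 1 - 1 = q' := by omega
    rw [h3]
    omega
  have htc : t = (q - 1) * c := by
    rw [ht, hq2m1, Nat.mul_div_cancel_left _ (by omega : 0 < a)]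
  have ht1 : 1 ≤ t := by
    rw [htc]; exact Nat.one_le_iff_ne_zero.mpr (Nat.mul_ne_zero (by omega) (by omega))
  have hta : a * t = q ^ 2 - 1 := by rw [htc]; exact hq2m1.symm
  have hβ : orderOf (ξ ^ a) = t := by
    rw [orderOf_pow_of_dvd (by omega : a ≠ 0) (hξ ▸ ⟨t, hta.symm⟩), hξ, ← hta,
      Nat.mul_div_cancel_left _ (by omega : 0 < a)]
  have htF : (t : F) ≠ 0 := by
    intro h0
    have hcard : ((q ^ 2 : ℕ) : F) = 0 := by
      rw [← hF]; exact FiniteField.cast_card_eq_zero F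
    have hd2 : ringChar F ∣ q ^ 2 := ringChar.dvd hcard
    have hdt : ringChar F ∣ t := ringChar.dvd h0
    have hdq21 : ringChar F ∣ q ^ 2 - 1 := hdt.trans ⟨a, by rw [← hta]; ring⟩
    have h1 : ringChar F ∣ q ^ 2 - (q ^ 2 - 1) := Nat.dvd_sub hd2 hdq21
    have hq4 : 4 ≤ q ^ 2 := by nlinarith
    have : ringChar F ∣ 1 := by
      have : q ^ 2 - (q ^ 2 - 1) = 1 := by omega
      rwa [this] at h1
    exact CharP.char_ne_one F (ringChar F) (Nat.dvd_one.mp this)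
  set N := q * i + j with hN
  have key : (∑ l : Fin (b + 1), ∑ s ∈ Finset.range t,
        (ξ ^ (l : ℕ) * (ξ ^ a) ^ s) ^ N * ρ l)
      = (∑ s ∈ Finset.range t, ((ξ ^ a) ^ N) ^ s) *
        ∑ l : Fin (b + 1), (ξ ^ N) ^ (l : ℕ) * ρ l := by
    rw [Finset.mul_sum]
    refine Finset.sum_congr rfl fun l _ => ?_
    rw [Finset.sum_mul]
    refine Finset.sum_congr rfl fun s _ => ?_
    ring
  rw [key]
  by_cases hdvd : t ∣ N
  · obtain ⟨υ, hυeq⟩ := hdvd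
    have hβt : (ξ ^ a) ^ t = 1 := hβ ▸ pow_orderOf_eq_one (ξ ^ a)
    have hβ1 : (ξ ^ a) ^ N = 1 := by rw [hυeq, pow_mul, hβt, one_pow]
    have hG : (∑ s ∈ Finset.range t, ((ξ ^ a) ^ N) ^ s) = (t : F) := by
      rw [hβ1]; simp
    rw [hG]
    have hS : ∑ l : Fin (b + 1), (ξ ^ N) ^ (l : ℕ) * ρ l
        = ∑ l : Fin (b + 1), ξ ^ (υ * t * (l : ℕ)) * ρ l := by
      refine Finset.sum_congr rfl fun l _ => ?_
      rw [← pow_mul, hυeq]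
      congr 1
      ring
    rw [hS]
    constructor
    · intro _
      rcases Nat.eq_zero_or_pos υ with h0 | h1
      · left
        rw [h0, mul_zero] at hυeq
        have hq0 : q * i = 0 ∧ j = 0 := by
          constructor <;> omega
        rcases Nat.mul_eq_zero.mp hq0.1 with h | h
        · omega
        · exact ⟨h, hq0.2⟩
      · right
        have hM2 : 2 ≤ m * c := by
          calc (2 : ℕ) = 2 * 1 := rfl
            _ ≤ m * c := Nat.mul_le_mul (by omega) hc1
        set M := m * c with hM_def
        have hi2 : i + 2 ≤ M := by omega
        have hj2 : j + 2 ≤ M := by omega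
        have hnat : q * i + j = υ * ((q - 1) * c) := by
          rw [← hN, hυeq, htc]; ring
        have hijZ : (q : ℤ) * i + j = (υ : ℤ) * (((q : ℤ) - 1) * c) := by
          zify [show (1 : ℕ) ≤ q by omega] at hnat
          exact hnat
        obtain ⟨hl, hr⟩ := aux_nt (q : ℤ) a b c m υ i j (by exact_mod_cast hq2)
          (by exact_mod_cast hc1) (by positivity) (by exact_mod_cast hac)
          (by exact_mod_cast hm2) (by exact_mod_cast hba) hijZ
          (by positivity) (by positivity)
          (by exact_mod_cast hi2) (by exact_mod_cast hj2)
          (by exact_mod_cast h1)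
        refine ⟨υ, by rw [hυeq]; ring, ?_, ?_⟩
        · have : (m : ℤ) - b ≤ υ := hl
          omega
        · have : (υ : ℤ) ≤ m - 1 := hr
          omega
    · rintro (⟨hi0, hj0⟩ | ⟨υ', hυ', hb1, hb2⟩)
      · have hN0 : N = 0 := by rw [hN, hi0, hj0]; ring
        have hυ0 : υ = 0 := by
          rw [hN0] at hυeq
          rcases Nat.mul_eq_zero.mp hυeq.symm with h | h
          · omega
          · exact h
        rw [hυ0]
        simp only [zero_mul, pow_zero, one_mul]
        exact mul_ne_zero htF hsum0
      · have hee : υ' = υ := by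
          have h1 : υ' * t = t * υ := by rw [← hυ']; exact hυeq
          have h2 : υ' * t = υ * t := by rw [h1]; ring
          exact Nat.eq_of_mul_eq_mul_right (by omega) h2
        rw [← hee]
        exact mul_ne_zero htF (hsumυ υ' hb1 hb2)
  · have hx1 : (ξ ^ a) ^ N ≠ 1 := fun h => hdvd (hβ ▸ orderOf_dvd_of_pow_eq_one h)
    have hβt : (ξ ^ a) ^ t = 1 := hβ ▸ pow_orderOf_eq_one (ξ ^ a)
    have hxt : ((ξ ^ a) ^ N) ^ t = 1 := by
      rw [← pow_mul, mul_comm N t, pow_mul, hβt, one_pow]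
    have hG : (∑ s ∈ Finset.range t, ((ξ ^ a) ^ N) ^ s) = 0 := by
      rw [geom_sum_eq hx1, hxt, sub_self, zero_div]
    rw [hG, zero_mul]
    constructor
    · intro h; exact absurd rfl h
    · rintro (⟨h1, h2⟩ | ⟨υ, hυ, _, _⟩)
      · have hN0 : N = 0 := by rw [hN, h1, h2]; ring
        exact absurd (show t ∣ N by rw [hN0]; exact dvd_zero t) hdvd
      · exact absurd (show t ∣ N by rw [hυ]; exact dvd_mul_left t υ) hdvd
end

section
/- Let q be a prime power, a | (q+1), t = (q^2−1)/a, and b ≤ a−4 with a+b even. If i, j, υ are integers with 0 ≤ i, j ≤ ((a+b+2)/2)·((q+1)/a) − 3 and qi + j + q + 1 = υt with 0 < υ < a, then i = υ(q+1)/a − 2 and j = q − υ(q+1)/a − 1, and moreover (a−b)/2 ≤ υ ≤ (a+b)/2. -/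
set_option maxHeartbeats 1600000 in
theorem stmt17 (q a t b i j υ : ℕ) (hq : IsPrimePow q) (ha : a ∣ q + 1)
    (ht : t = (q ^ 2 - 1) / a) (hb : b + 4 ≤ a) (hab : (a + b) % 2 = 0)
    (hi : i ≤ ((a + b + 2) / 2) * ((q + 1) / a) - 3)
    (hj : j ≤ ((a + b + 2) / 2) * ((q + 1) / a) - 3)
    (hυ1 : 0 < υ) (hυ2 : υ < a)
    (heq : q * i + j + q + 1 = υ * t) :
    i = υ * ((q + 1) / a) - 2 ∧ j = q - υ * ((q + 1) / a) - 1 ∧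
      (a - b) / 2 ≤ υ ∧ υ ≤ (a + b) / 2 := by
  obtain ⟨c, hac⟩ := ha
  have hq2 : 2 ≤ q := hq.two_le
  have ha4 : 4 ≤ a := by omega
  have hapos : 0 < a := by omega
  have hc1 : 1 ≤ c := by nlinarith
  have hca : (q + 1) / a = c := by rw [hac]; exact Nat.mul_div_cancel_left c hapos
  -- t = c * (q - 1)
  have hsq : q ^ 2 - 1 = a * (c * (q - 1)) := by
    have h1 : q ^ 2 = q * q := sq q
    have h2 : q - 1 + 1 = q := by omega
    have h3 : (q + 1) * (q - 1) + 1 = q * q := by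
      nlinarith [h2]
    calc q ^ 2 - 1 = (q + 1) * (q - 1) := by omega
    _ = a * c * (q - 1) := by rw [hac]
    _ = a * (c * (q - 1)) := by ring
  have ht' : t = c * (q - 1) := by
    rw [ht, hsq, Nat.mul_div_cancel_left _ hapos]
  -- abbreviate s = υ * c
  obtain ⟨m, hm⟩ : ∃ m, a + b = 2 * m := ⟨(a + b) / 2, by omega⟩
  have hmb : b + 2 ≤ m := by omega
  rw [hca] at hi hj
  have hdiv : (a + b + 2) / 2 = m + 1 := by omega
  rw [hdiv] at hi hj
  have hX3 : 3 ≤ (m + 1) * c := le_trans (by omega) (Nat.mul_le_mul (le_refl (m+1)) hc1)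
  have hi' : i + 3 ≤ (m + 1) * c := by
    obtain ⟨X, hX⟩ : ∃ X, X = (m + 1) * c := ⟨_, rfl⟩
    rw [← hX] at hi hX3; omega
  have hj' : j + 3 ≤ (m + 1) * c := by
    obtain ⟨X, hX⟩ : ∃ X, X = (m + 1) * c := ⟨_, rfl⟩
    rw [← hX] at hj hX3; omega
  -- j + 3 ≤ q
  have hm2a : (m + 2) * c ≤ a * c := Nat.mul_le_mul_right c (by omega)
  have hj3 : j + 3 + c ≤ q + 1 := by
    have : (m + 1) * c + c = (m + 2) * c := by ring
    omega
  -- bounds on s := υ * c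
  have hs1 : 1 ≤ υ * c := Nat.one_le_iff_ne_zero.mpr (by positivity)
  have hs2 : υ * c + c ≤ q + 1 := by
    have h := Nat.mul_le_mul_right c (show υ + 1 ≤ a by omega)
    rw [add_mul, one_mul] at h
    omega
  -- the main equation over ℤ
  rw [ht', ← mul_assoc] at heq
  have Ez : (q : ℤ) * i + j + q + 1 = (υ * c : ℕ) * ((q : ℤ) - 1) := by
    have := congrArg (Nat.cast : ℕ → ℤ) heq
    push_cast [Nat.cast_sub (show 1 ≤ q by omega)] at this ⊢
    linarith
  have hs1z : (1 : ℤ) ≤ (υ * c : ℕ) := by exact_mod_cast hs1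
  have hs2z : ((υ * c : ℕ) : ℤ) + c ≤ (q : ℤ) + 1 := by exact_mod_cast hs2
  have hc1z : (1 : ℤ) ≤ (c : ℤ) := by exact_mod_cast hc1
  have hj3z : (j : ℤ) + 3 + c ≤ (q : ℤ) + 1 := by exact_mod_cast hj3
  have hq2z : (2 : ℤ) ≤ (q : ℤ) := by exact_mod_cast hq2
  have key : (q : ℤ) * ((i : ℤ) + 2 - (υ * c : ℕ)) = ((q : ℤ) - (υ * c : ℕ)) - ((j : ℤ) + 1) := by
    linear_combination Ez
  have hjnn : (0 : ℤ) ≤ (j : ℤ) := Int.ofNat_nonneg j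
  have hd : (i : ℤ) + 2 - ((υ * c : ℕ) : ℤ) = 0 := by
    by_contra h
    rcases lt_or_gt_of_ne h with h | h
    · have h1 : (i : ℤ) + 2 - ((υ * c : ℕ) : ℤ) ≤ -1 := by
        have := Int.lt_iff_add_one_le.mp h; linarith
      have h2 := mul_le_mul_of_nonneg_left h1 (show (0:ℤ) ≤ q by linarith)
      linarith
    · have h1 : (1 : ℤ) ≤ (i : ℤ) + 2 - ((υ * c : ℕ) : ℤ) :=
        Int.lt_iff_add_one_le.mp h
      have h2 := mul_le_mul_of_nonneg_left h1 (show (0:ℤ) ≤ q by linarith)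
      linarith
  have hiz : i + 2 = υ * c := by
    have : ((i : ℤ) + 2) = ((υ * c : ℕ) : ℤ) := by linarith
    exact_mod_cast this
  have hjz : j + 1 + υ * c = q := by
    have : (j : ℤ) + 1 + ((υ * c : ℕ) : ℤ) = (q : ℤ) := by
      rw [hd] at key; linarith
    exact_mod_cast this
  rw [hca]
  refine ⟨by omega, ?_, ?_, ?_⟩
  · -- j = q - υ*c - 1
    omega
  · -- (a-b)/2 ≤ υ
    have h1 : (υ + m + 1) * c = υ * c + (m + 1) * c := by ring
    have h2 : a * c < (υ + m + 1) * c := by omega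
    have h3 : a < υ + m + 1 := Nat.lt_of_mul_lt_mul_right h2
    omega
  · -- υ ≤ (a+b)/2
    have h2 : υ * c < (m + 1) * c := by omega
    have h3 : υ < m + 1 := Nat.lt_of_mul_lt_mul_right h2
    omega
end

section
/- Let q be a prime power, a | (q+1), t = (q^2−1)/a, ξ a primitive element of F_{q^2}, b ≤ a−4 with a+b even, m = (a−b)/2. For i = 1,…,b+1 define φ_i = (1, ξ^{(m+i−1)t−q−1}, ξ^{2((m+i−1)t−q−1)}, …, ξ^{b((m+i−1)t−q−1)}) ∈ F_{q^2}^{b+1}. Then the coordinatewise q-th power of φ_i equals φ_{b+2−i} for each i = 1,…,b+1. -/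
theorem stmt19 (q a t b m : ℕ) (hq : IsPrimePow q) (ha : a ∣ q + 1)
    (ht : t = (q ^ 2 - 1) / a) (hba : b + 4 ≤ a) (hab : (a + b) % 2 = 0)
    (hm : m = (a - b) / 2)
    (F : Type) [Field F] [Fintype F] (hF : Fintype.card F = q ^ 2)
    (ξ : Fˣ) (hξ : orderOf ξ = q ^ 2 - 1) :
    ∀ i : ℕ, 1 ≤ i → i ≤ b + 1 → ∀ l : Fin (b + 1),
      (ξ ^ ((((m : ℤ) + i - 1) * t - q - 1) * (l : ℕ))) ^ q =
        ξ ^ ((((m : ℤ) + ((b : ℤ) + 2 - i) - 1) * t - q - 1) * (l : ℕ)) := by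
  intro i hi1 hib l
  have hq2 : 2 ≤ q := hq.two_le
  obtain ⟨c, hc⟩ := ha
  have hq1 : 1 ≤ q ^ 2 := by nlinarith
  have haq : a ∣ q ^ 2 - 1 := by
    refine (Dvd.intro c hc.symm : a ∣ q + 1).trans ⟨q - 1, ?_⟩
    have h1 : 1 ≤ q := by omega
    nlinarith [Nat.sub_add_cancel h1, Nat.sub_add_cancel hq1]
  have hat : a * t = q ^ 2 - 1 := by rw [ht, Nat.mul_div_cancel' haq]
  have hmb : 2 * m + b = a := by omega
  have hatZ : (a : ℤ) * t = (q : ℤ) ^ 2 - 1 := by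
    have := congrArg (Nat.cast : ℕ → ℤ) hat
    push_cast [Nat.cast_sub hq1] at this
    linarith
  have hcZ : (q : ℤ) + 1 = (a : ℤ) * c := by exact_mod_cast hc
  have hmbZ : 2 * (m : ℤ) + b = a := by exact_mod_cast hmb
  have h1 : (q : ℤ) * t = ((q : ℤ) ^ 2 - 1) * c - t := by
    linear_combination (t : ℤ) * hcZ + (c : ℤ) * hatZ
  rw [← zpow_natCast (ξ ^ _) q, ← zpow_mul, zpow_eq_zpow_iff_modEq, hξ]
  have hcast : ((q ^ 2 - 1 : ℕ) : ℤ) = (q : ℤ) ^ 2 - 1 := by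
    push_cast [Nat.cast_sub hq1]; ring
  rw [Int.modEq_iff_dvd, hcast]
  refine ⟨(l : ℕ) * (2 - c * ((m : ℤ) + i - 1)), ?_⟩
  linear_combination (-(l : ℤ) * ((m : ℤ) + i - 1)) * h1 + ((l : ℤ) * t) * hmbZ +
    (l : ℤ) * hatZ
end
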